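/- For every Pandora's Box instance with a finite scenario set, every run of Weitzman's rule with full updates (Algorithm 3), every partially-adaptive solution with total opening cost OPT_o = Σ_{s∈S} c^OPT(s) and total value cost OPT_v = Σ_{s∈S} v^OPT(s), and all parameters β, γ ∈ (0,1), the algorithm's total cost satisfies ALG ≤ OPT_o/(β·γ·(1−γ)) + OPT_v/((1−β)·γ). -/

import Mathlib

open scoped Classical

/-- Opening cost paid on scenario `s` by the partially-adaptive solution that opens the
boxes in the order `π` and stops on scenario `s` after opening box `π (t s)`. -/
noncomputable def optOpenCost {B S : Type*} [Fintype B] (c : B → ℝ)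
    (π : Fin (Fintype.card B) ≃ B) (t : S → Fin (Fintype.card B)) (s : S) : ℝ :=
  ∑ i ∈ Finset.Iic (t s), c (π i)

/-- Value selected on scenario `s` by the partially-adaptive solution `(π, t)`:
the minimum value among the opened boxes `π 0, …, π (t s)`. -/
noncomputable def optValue {B S : Type*} [Fintype B] (v : B → S → ℝ)
    (π : Fin (Fintype.card B) ≃ B) (t : S → Fin (Fintype.card B)) (s : S) : ℝ :=
  (Finset.Iic (t s)).inf' Finset.nonempty_Iic (fun i => v (π i) s)

/-- In the tree of states built by Algorithm 3 (full updates), `fullPath v bx A s k` is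
the set of scenarios still consistent with scenario `s` at depth `k`: the root state is
all scenarios, and the child containing `s` consists of the uncovered scenarios whose
value in the opened box `bx R` agrees with that of `s`. -/
noncomputable def fullPath {B S : Type*} [Fintype S] [DecidableEq S]
    (v : B → S → ℝ) (bx : Finset S → B) (A : Finset S → Finset S) (s : S) : ℕ → Finset S
  | 0 => Finset.univ
  | k + 1 =>
      (fullPath v bx A s k \ A (fullPath v bx A s k)).filter
        (fun s' => v (bx (fullPath v bx A s k)) s' = v (bx (fullPath v bx A s k)) s)

/-- The vector of (residual) opening costs at the state of depth `k` on scenario `s`'s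
root-to-leaf path: initially the original costs, and the cost of each opened box is set
to `0` in its children. -/
noncomputable def fullCostAt {B S : Type*} [Fintype S] [DecidableEq S] [DecidableEq B]
    (c : B → ℝ) (v : B → S → ℝ) (bx : Finset S → B) (A : Finset S → Finset S)
    (s : S) : ℕ → B → ℝ
  | 0 => c
  | k + 1 => Function.update (fullCostAt c v bx A s k) (bx (fullPath v bx A s k)) 0

lemma exists_quantile {S : Type*} (R : Finset S) (g : S → ℝ) (j : ℕ)
    (hj1 : 1 ≤ j) (hjR : j ≤ R.card) :
    ∃ s₀ ∈ R, j ≤ (R.filter (fun t => g s₀ ≤ g t)).card ∧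
      (R.filter (fun t => g s₀ < g t)).card < j := by
  have hRne : R.Nonempty := Finset.card_pos.mp (lt_of_lt_of_le hj1 hjR)
  set C := R.filter (fun s₀ => (R.filter (fun t => g s₀ < g t)).card < j) with hC
  have hCne : C.Nonempty := by
    obtain ⟨sm, hsm, hmax⟩ := Finset.exists_max_image R g hRne
    refine ⟨sm, Finset.mem_filter.mpr ⟨hsm, ?_⟩⟩
    have : R.filter (fun t => g sm < g t) = ∅ := by
      apply Finset.filter_eq_empty_iff.mpr
      intro t ht
      exact not_lt.mpr (hmax t ht)
    rw [this]
    simp only [Finset.card_empty]; omega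
  obtain ⟨s₀, hs₀C, hmin⟩ := Finset.exists_min_image C g hCne
  obtain ⟨hs₀R, hs₀p⟩ := Finset.mem_filter.mp hs₀C
  refine ⟨s₀, hs₀R, ?_, hs₀p⟩
  by_contra hcon
  push_neg at hcon
  rcases Finset.eq_empty_or_nonempty (R.filter (fun t => g t < g s₀)) with hemp | hne
  · have : R.filter (fun t => g s₀ ≤ g t) = R := by
      apply Finset.filter_true_of_mem
      intro t ht
      by_contra hlt
      exact (Finset.filter_eq_empty_iff.mp hemp) ht (not_le.mp hlt)
    rw [this] at hcon
    exact absurd hjR (not_le.mpr hcon)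
  · obtain ⟨s₁, hs₁, hmax1⟩ := Finset.exists_max_image _ g hne
    obtain ⟨hs₁R, hs₁lt⟩ := Finset.mem_filter.mp hs₁
    have hsub : R.filter (fun t => g s₁ < g t) ⊆ R.filter (fun t => g s₀ ≤ g t) := by
      intro t ht
      obtain ⟨htR, htg⟩ := Finset.mem_filter.mp ht
      refine Finset.mem_filter.mpr ⟨htR, ?_⟩
      by_contra hlt
      exact absurd htg (not_lt.mpr (hmax1 t (Finset.mem_filter.mpr ⟨htR, not_le.mp hlt⟩)))
    have hs₁C : s₁ ∈ C :=
      Finset.mem_filter.mpr ⟨hs₁R, lt_of_le_of_lt (Finset.card_le_card hsub) hcon⟩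
    exact absurd hs₁lt (not_lt.mpr (hmin s₁ hs₁C))

lemma layer_cake {S : Type*} [Fintype S] (m : ℝ) (hm : 0 < m) :
    ∀ N : ℕ, ∀ f g : S → ℝ, (∀ s, 0 ≤ f s) → (∀ s, 0 ≤ g s) →
    (Finset.univ.filter (fun s => 0 < f s)).card ≤ N →
    (∀ t : ℝ, 0 < t →
      m * (Finset.univ.filter (fun s => t ≤ f s)).card ≤
        (Finset.univ.filter (fun s => t ≤ g s)).card) →
    m * ∑ s, f s ≤ ∑ s, g s := by
  intro N
  induction N with
  | zero =>
    intro f g hf hg hsupp _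
    have : ∀ s, f s = 0 := by
      intro s
      by_contra h
      have : s ∈ Finset.univ.filter (fun s => 0 < f s) :=
        Finset.mem_filter.mpr ⟨Finset.mem_univ s, lt_of_le_of_ne (hf s) (Ne.symm h)⟩
      have := Finset.card_pos.mpr ⟨s, this⟩
      omega
    simp only [this, Finset.sum_const_zero, mul_zero]
    exact Finset.sum_nonneg fun s _ => hg s
  | succ N ih =>
    intro f g hf hg hsupp hcount
    rcases Finset.eq_empty_or_nonempty (Finset.univ.filter (fun s => 0 < f s)) with hemp | hne
    · have : ∀ s, f s = 0 := by
        intro s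
        by_contra h
        exact Finset.notMem_empty s (hemp ▸ Finset.mem_filter.mpr
          ⟨Finset.mem_univ s, lt_of_le_of_ne (hf s) (Ne.symm h)⟩)
      simp only [this, Finset.sum_const_zero, mul_zero]
      exact Finset.sum_nonneg fun s _ => hg s
    · obtain ⟨s₀, hs₀, hminf⟩ := Finset.exists_min_image _ f hne
      set t₀ := f s₀ with ht₀def
      have ht₀ : 0 < t₀ := (Finset.mem_filter.mp hs₀).2
      have hkey : ∀ s, 0 < f s ↔ t₀ ≤ f s := by
        intro s
        constructor
        · intro h
          exact hminf s (Finset.mem_filter.mpr ⟨Finset.mem_univ s, h⟩)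
        · intro h; linarith
      set f' := fun s => f s - min (f s) t₀ with hf'def
      set g' := fun s => g s - min (g s) t₀ with hg'def
      have hf'0 : ∀ s, 0 ≤ f' s := fun s => sub_nonneg.mpr (min_le_left _ _)
      have hg'0 : ∀ s, 0 ≤ g' s := fun s => sub_nonneg.mpr (min_le_left _ _)
      -- shifted level sets
      have hflevel : ∀ t : ℝ, 0 < t →
          Finset.univ.filter (fun s => t ≤ f' s) =
            Finset.univ.filter (fun s => t + t₀ ≤ f s) := by
        intro t ht
        apply Finset.filter_congr
        intro s _
        simp only [hf'def, eq_iff_iff]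
        rcases le_or_gt t₀ (f s) with h | h
        · rw [min_eq_right h]; constructor <;> intro <;> linarith
        · rw [min_eq_left h.le]; constructor <;> intro <;> [linarith; linarith]
      have hglevel : ∀ t : ℝ, 0 < t →
          Finset.univ.filter (fun s => t ≤ g' s) =
            Finset.univ.filter (fun s => t + t₀ ≤ g s) := by
        intro t ht
        apply Finset.filter_congr
        intro s _
        simp only [hg'def, eq_iff_iff]
        rcases le_or_gt t₀ (g s) with h | h
        · rw [min_eq_right h]; constructor <;> intro <;> linarith
        · rw [min_eq_left h.le]; constructor <;> intro <;> [linarith; linarith]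
      -- support decreases
      have hsupp' : (Finset.univ.filter (fun s => 0 < f' s)).card ≤ N := by
        have hsub : Finset.univ.filter (fun s => 0 < f' s) ⊆
            (Finset.univ.filter (fun s => 0 < f s)).erase s₀ := by
          intro s hs
          have hfs' : 0 < f' s := (Finset.mem_filter.mp hs).2
          have hfs : 0 < f s := by
            by_contra h
            have : f s = 0 := le_antisymm (not_lt.mp h) (hf s)
            simp [hf'def, this, le_of_lt ht₀] at hfs'
          refine Finset.mem_erase.mpr ⟨?_, Finset.mem_filter.mpr ⟨Finset.mem_univ s, hfs⟩⟩
          intro h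
          subst h
          simp [hf'def, ht₀def] at hfs'
        calc (Finset.univ.filter (fun s => 0 < f' s)).card
            ≤ ((Finset.univ.filter (fun s => 0 < f s)).erase s₀).card :=
              Finset.card_le_card hsub
          _ ≤ (Finset.univ.filter (fun s => 0 < f s)).card - 1 := by
              rw [Finset.card_erase_of_mem hs₀]
          _ ≤ N := by omega
      have hcount' : ∀ t : ℝ, 0 < t →
          m * (Finset.univ.filter (fun s => t ≤ f' s)).card ≤
            (Finset.univ.filter (fun s => t ≤ g' s)).card := by
        intro t ht
        rw [hflevel t ht, hglevel t ht]
        exact hcount (t + t₀) (by linarith)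
      have hih := ih f' g' hf'0 hg'0 hsupp' hcount'
      -- sum decompositions
      have hfs : ∑ s, f s = ∑ s, f' s + ∑ s, min (f s) t₀ := by
        rw [← Finset.sum_add_distrib]
        apply Finset.sum_congr rfl
        intro s _
        simp [hf'def]
      have hgs : ∑ s, g s = ∑ s, g' s + ∑ s, min (g s) t₀ := by
        rw [← Finset.sum_add_distrib]
        apply Finset.sum_congr rfl
        intro s _
        simp [hg'def]
      have hfmin : ∑ s, min (f s) t₀ =
          t₀ * (Finset.univ.filter (fun s => t₀ ≤ f s)).card := by
        have : ∀ s : S, min (f s) t₀ = if t₀ ≤ f s then t₀ else 0 := by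
          intro s
          rcases le_or_gt t₀ (f s) with h | h
          · rw [min_eq_right h, if_pos h]
          · rw [if_neg (not_le.mpr h)]
            have hfz : f s = 0 := by
              by_contra hne
              have h0 : 0 < f s := lt_of_le_of_ne (hf s) (Ne.symm hne)
              exact absurd ((hkey s).mp h0) (not_le.mpr h)
            simp [hfz, le_of_lt ht₀]
        rw [Finset.sum_congr rfl (fun s _ => this s), Finset.sum_ite, Finset.sum_const,
          Finset.sum_const_zero, add_zero, nsmul_eq_mul, mul_comm]
      have hgmin : t₀ * (Finset.univ.filter (fun s => t₀ ≤ g s)).card ≤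
          ∑ s, min (g s) t₀ := by
        calc t₀ * (Finset.univ.filter (fun s => t₀ ≤ g s)).card
            = ∑ _s ∈ Finset.univ.filter (fun s => t₀ ≤ g s), t₀ := by
              rw [Finset.sum_const, nsmul_eq_mul, mul_comm]
          _ ≤ ∑ s ∈ Finset.univ.filter (fun s => t₀ ≤ g s), min (g s) t₀ := by
              apply Finset.sum_le_sum
              intro s hs
              exact le_min (Finset.mem_filter.mp hs).2 le_rfl
          _ ≤ ∑ s, min (g s) t₀ := by
              apply Finset.sum_le_sum_of_subset_of_nonneg (Finset.filter_subset _ _)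
              intro s _ _
              exact le_min (hg s) (le_of_lt ht₀)
      have hc0 := hcount t₀ ht₀
      have hstep : m * (t₀ * (Finset.univ.filter (fun s => t₀ ≤ f s)).card) ≤
          t₀ * (Finset.univ.filter (fun s => t₀ ≤ g s)).card := by
        rw [show m * (t₀ * ((Finset.univ.filter (fun s => t₀ ≤ f s)).card : ℝ)) =
          t₀ * (m * ((Finset.univ.filter (fun s => t₀ ≤ f s)).card : ℝ)) by ring]
        exact mul_le_mul_of_nonneg_left hc0 (le_of_lt ht₀)
      rw [hfs, hgs, mul_add, hfmin]
      have := add_le_add hih hstep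
      linarith [hgmin]

section Tree

variable {B S : Type*} [Fintype S] [DecidableEq B] [DecidableEq S]
variable (c : B → ℝ) (v : B → S → ℝ) (bx : Finset S → B) (A : Finset S → Finset S) (d : S → ℕ)

lemma fullPath_succ_subset (s : S) (k : ℕ) :
    fullPath v bx A s (k + 1) ⊆ fullPath v bx A s k := by
  intro t ht
  rw [fullPath] at ht
  exact (Finset.mem_sdiff.mp (Finset.mem_filter.mp ht).1).1

lemma fullPath_subset_of_le (s : S) {j k : ℕ} (h : j ≤ k) :
    fullPath v bx A s k ⊆ fullPath v bx A s j := by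
  induction k with
  | zero => simp_all
  | succ n ih =>
    rcases Nat.lt_or_ge j (n + 1) with h' | h'
    · exact (fullPath_succ_subset v bx A s n).trans (ih (by omega))
    · have : j = n + 1 := by omega
      subst this; rfl

lemma notmem_A_of_mem_succ {s t : S} {k : ℕ} (h : t ∈ fullPath v bx A s (k + 1)) :
    t ∉ A (fullPath v bx A s k) := by
  rw [fullPath] at h
  exact (Finset.mem_sdiff.mp (Finset.mem_filter.mp h).1).2

lemma fullPath_eq_of_mem {s t : S} {k : ℕ} (h : t ∈ fullPath v bx A s k) :
    fullPath v bx A t k = fullPath v bx A s k := by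
  induction k with
  | zero => rfl
  | succ n ih =>
    have htn : t ∈ fullPath v bx A s n := fullPath_succ_subset v bx A s n h
    have hPeq := ih htn
    have hval : v (bx (fullPath v bx A s n)) t = v (bx (fullPath v bx A s n)) s := by
      rw [fullPath] at h
      exact (Finset.mem_filter.mp h).2
    rw [fullPath, fullPath, hPeq, hval]

lemma fullCostAt_eq_of_mem {s t : S} {k : ℕ} (h : t ∈ fullPath v bx A s k) :
    fullCostAt c v bx A t k = fullCostAt c v bx A s k := by
  induction k with
  | zero => rfl
  | succ n ih =>
    have htn : t ∈ fullPath v bx A s n := fullPath_succ_subset v bx A s n h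
    rw [fullCostAt, fullCostAt, ih htn, fullPath_eq_of_mem v bx A htn]

lemma fullCostAt_nonneg (hc : ∀ b, 0 ≤ c b) (s : S) (k : ℕ) (b : B) :
    0 ≤ fullCostAt c v bx A s k b := by
  induction k with
  | zero => exact hc b
  | succ n ih =>
    rw [fullCostAt, Function.update_apply]
    split <;> simp_all

lemma fullCostAt_le (hc : ∀ b, 0 ≤ c b) (s : S) (k : ℕ) (b : B) :
    fullCostAt c v bx A s k b ≤ c b := by
  induction k with
  | zero => exact le_refl _
  | succ n ih =>
    rw [fullCostAt, Function.update_apply]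
    split
    · exact hc b
    · exact ih

variable (hnotcov : ∀ s : S, ∀ k < d s, s ∉ A (fullPath v bx A s k))
variable (hcov : ∀ s : S, s ∈ A (fullPath v bx A s (d s)))

include hnotcov in
lemma mem_fullPath_self (s : S) {k : ℕ} (hk : k ≤ d s) : s ∈ fullPath v bx A s k := by
  induction k with
  | zero => simp [fullPath]
  | succ n ih =>
    rw [fullPath]
    refine Finset.mem_filter.mpr ⟨Finset.mem_sdiff.mpr ⟨ih (by omega), ?_⟩, rfl⟩
    exact hnotcov s n (by omega)

include hcov in
lemma le_d_of_mem_fullPath {s : S} {k : ℕ} (h : s ∈ fullPath v bx A s k) : k ≤ d s := by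
  by_contra hlt
  have h1 : s ∈ fullPath v bx A s (d s + 1) :=
    fullPath_subset_of_le v bx A s (by omega) h
  exact notmem_A_of_mem_succ v bx A h1 (hcov s)

include hnotcov hcov in
lemma d_eq_of_mem_A {s t : S} {k : ℕ} (hk : k ≤ d s) (ht : t ∈ A (fullPath v bx A s k))
    (hAsub : ∀ s : S, ∀ k ≤ d s, A (fullPath v bx A s k) ⊆ fullPath v bx A s k) :
    d t = k ∧ fullPath v bx A t k = fullPath v bx A s k := by
  have htP : t ∈ fullPath v bx A s k := hAsub s k hk ht
  have hPeq := fullPath_eq_of_mem v bx A htP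
  have htP' : t ∈ fullPath v bx A t k := hPeq ▸ htP
  have hkd : k ≤ d t := le_d_of_mem_fullPath v bx A d hcov htP'
  have htA : t ∈ A (fullPath v bx A t k) := hPeq ▸ ht
  have : ¬ (k < d t) := fun h => hnotcov t k h htA
  exact ⟨by omega, hPeq⟩

include hnotcov hcov in
lemma depth_unique {s t : S} {k k' : ℕ} (hk : k ≤ d s) (hk' : k' ≤ d t)
    (heq : fullPath v bx A s k = fullPath v bx A t k')
    (hAsub : ∀ s : S, ∀ k ≤ d s, A (fullPath v bx A s k) ⊆ fullPath v bx A s k)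
    (hAne : ∀ s : S, ∀ k ≤ d s, (A (fullPath v bx A s k)).Nonempty) : k = k' := by
  have hs : s ∈ fullPath v bx A s k := mem_fullPath_self v bx A d hnotcov s hk
  have hs' : s ∈ fullPath v bx A t k' := heq ▸ hs
  have hPeq' : fullPath v bx A s k' = fullPath v bx A t k' := fullPath_eq_of_mem v bx A hs'
  have hk'd : k' ≤ d s := le_d_of_mem_fullPath v bx A d hcov (hPeq' ▸ hs')
  have hPP : fullPath v bx A s k = fullPath v bx A s k' := by rw [heq, hPeq']
  have key : ∀ a b : ℕ, a < b → b ≤ d s → fullPath v bx A s a = fullPath v bx A s b → False := by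
    intro a b hab hbd habeq
    obtain ⟨u, hu⟩ := hAne s a (by omega)
    have huP : u ∈ fullPath v bx A s b := by
      rw [← habeq]
      exact hAsub s a (by omega) hu
    have huP1 : u ∈ fullPath v bx A s (a + 1) :=
      fullPath_subset_of_le v bx A s (by omega) huP
    exact notmem_A_of_mem_succ v bx A huP1 hu
  rcases lt_trichotomy k k' with h | h | h
  · exact absurd (key k k' h hk'd hPP) not_false
  · exact h
  · exact absurd (key k' k h hk hPP.symm) not_false


include hnotcov hcov in
lemma histogram_bound
    (hAsub : ∀ s : S, ∀ k ≤ d s, A (fullPath v bx A s k) ⊆ fullPath v bx A s k)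
    (g : S → ℝ) (hg : ∀ s, 0 ≤ g s) (m : ℝ) (hm : 0 < m)
    (X : S → ℝ) (hX0 : ∀ s, 0 ≤ X s)
    (hdens : ∀ s : S, m * ((fullPath v bx A s (d s)).card : ℝ) ≤
      (((fullPath v bx A s (d s)).filter (fun u => X s ≤ g u)).card : ℝ)) :
    m * ∑ s, X s ≤ ∑ s, g s := by
  apply layer_cake m hm (Fintype.card S) X g hX0 hg (le_trans (Finset.card_le_univ _) le_rfl)
  intro t ht
  -- counting at level t
  have hex : ∀ s : S, t ≤ X s → ∃ k, k ≤ d s ∧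
      m * ((fullPath v bx A s k).card : ℝ) ≤
        (((fullPath v bx A s k).filter (fun u => t ≤ g u)).card : ℝ) := by
    intro s hs
    refine ⟨d s, le_rfl, ?_⟩
    refine le_trans (hdens s) ?_
    have : (fullPath v bx A s (d s)).filter (fun u => X s ≤ g u) ⊆
        (fullPath v bx A s (d s)).filter (fun u => t ≤ g u) := by
      apply Finset.monotone_filter_right
      intro u hu h
      linarith
    exact_mod_cast Nat.cast_le.mpr (Finset.card_le_card this)
  set D := Finset.univ.filter (fun s => t ≤ X s) with hD
  set H := Finset.univ.filter (fun s => t ≤ g s) with hH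
  let kk : S → ℕ := fun s => if hs : t ≤ X s then Nat.find (hex s hs) else 0
  let M : S → Finset S := fun s => fullPath v bx A s (kk s)
  have hkk_spec : ∀ s ∈ D, kk s ≤ d s ∧
      m * ((M s).card : ℝ) ≤ (((M s).filter (fun u => t ≤ g u)).card : ℝ) := by
    intro s hs
    have hts : t ≤ X s := (Finset.mem_filter.mp hs).2
    simp only [kk, M, dif_pos hts]
    exact Nat.find_spec (hex s hts)
  have hkk_min : ∀ s ∈ D, ∀ j, j ≤ d s →
      m * ((fullPath v bx A s j).card : ℝ) ≤
        (((fullPath v bx A s j).filter (fun u => t ≤ g u)).card : ℝ) → kk s ≤ j := by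
    intro s hs j hj hdj
    have hts : t ≤ X s := (Finset.mem_filter.mp hs).2
    simp only [kk, dif_pos hts]
    exact Nat.find_min' (hex s hts) ⟨hj, hdj⟩
  have hmem_M : ∀ s ∈ D, s ∈ M s := by
    intro s hs
    exact mem_fullPath_self v bx A d hnotcov s (hkk_spec s hs).1
  -- dichotomy
  have hdich : ∀ s ∈ D, ∀ s' ∈ D, M s = M s' ∨ Disjoint (M s) (M s') := by
    have key : ∀ s ∈ D, ∀ s' ∈ D, kk s ≤ kk s' → ¬ Disjoint (M s) (M s') → M s = M s' := by
      intro s hs s' hs' hkle hnd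
      obtain ⟨u, hu⟩ := Finset.not_disjoint_iff.mp hnd
      have hu1 : u ∈ fullPath v bx A s (kk s) := hu.1
      have hu2 : u ∈ fullPath v bx A s' (kk s') := hu.2
      have he1 : fullPath v bx A u (kk s) = M s := fullPath_eq_of_mem v bx A hu1
      have he2 : fullPath v bx A u (kk s') = M s' := fullPath_eq_of_mem v bx A hu2
      -- M s' ⊆ fullPath u (kk s) = M s
      have hsub : M s' ⊆ M s := by
        rw [← he1, ← he2]
        exact fullPath_subset_of_le v bx A u hkle
      -- s' ∈ M s, so fullPath s' (kk s) = M s, and kk s ≤ d s'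
      have hs'M : s' ∈ M s := hsub (hmem_M s' hs')
      have he3 : fullPath v bx A s' (kk s) = M s := fullPath_eq_of_mem v bx A hs'M
      have hds' : kk s ≤ d s' := by
        apply le_d_of_mem_fullPath v bx A d hcov
        rw [he3]
        exact hs'M
      have hdens3 : m * ((fullPath v bx A s' (kk s)).card : ℝ) ≤
          (((fullPath v bx A s' (kk s)).filter (fun u => t ≤ g u)).card : ℝ) := by
        rw [he3]
        exact (hkk_spec s hs).2
      have : kk s' ≤ kk s := hkk_min s' hs' (kk s) hds' hdens3
      have hkeq : kk s = kk s' := le_antisymm hkle this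
      rw [← he1, ← he2, hkeq]
    intro s hs s' hs'
    by_cases hd : Disjoint (M s) (M s')
    · exact Or.inr hd
    · left
      rcases le_total (kk s) (kk s') with h | h
      · exact key s hs s' hs' h hd
      · exact (key s' hs' s hs h (fun hdd => hd hdd.symm)).symm
  -- |D| ≤ ∑ over distinct M values of |M'|
  set MS := D.image M with hMS
  have hdisjMS : ∀ x ∈ MS, ∀ y ∈ MS, x ≠ y → Disjoint x y := by
    intro x hx y hy hne
    obtain ⟨s, hs, rfl⟩ := Finset.mem_image.mp hx
    obtain ⟨s', hs', rfl⟩ := Finset.mem_image.mp hy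
    rcases hdich s hs s' hs' with h | h
    · exact absurd h hne
    · exact h
  have hDsub : D ⊆ MS.biUnion id := by
    intro s hs
    exact Finset.mem_biUnion.mpr ⟨M s, Finset.mem_image_of_mem M hs, hmem_M s hs⟩
  have hcard1 : (D.card : ℝ) ≤ ∑ M' ∈ MS, (M'.card : ℝ) := by
    have h1 : D.card ≤ (MS.biUnion id).card := Finset.card_le_card hDsub
    have h2 : (MS.biUnion id).card = ∑ M' ∈ MS, M'.card := Finset.card_biUnion hdisjMS
    exact_mod_cast h1.trans_eq h2
  have hcard2 : m * ∑ M' ∈ MS, (M'.card : ℝ) ≤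
      ∑ M' ∈ MS, ((M'.filter (fun u => t ≤ g u)).card : ℝ) := by
    rw [Finset.mul_sum]
    apply Finset.sum_le_sum
    intro M' hM'
    obtain ⟨s, hs, rfl⟩ := Finset.mem_image.mp hM'
    exact (hkk_spec s hs).2
  have hcard3 : ∑ M' ∈ MS, ((M'.filter (fun u => t ≤ g u)).card : ℝ) ≤ (H.card : ℝ) := by
    have hdisj2 : ∀ x ∈ MS, ∀ y ∈ MS, x ≠ y →
        Disjoint (x.filter (fun u => t ≤ g u)) (y.filter (fun u => t ≤ g u)) := by
      intro x hx y hy hne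
      exact Finset.disjoint_filter_filter (hdisjMS x hx y hy hne)
    have h2 : (MS.biUnion (fun M' => M'.filter (fun u => t ≤ g u))).card =
        ∑ M' ∈ MS, (M'.filter (fun u => t ≤ g u)).card := Finset.card_biUnion hdisj2
    have h3 : MS.biUnion (fun M' => M'.filter (fun u => t ≤ g u)) ⊆ H := by
      intro u hu
      obtain ⟨M', _, huM⟩ := Finset.mem_biUnion.mp hu
      exact Finset.mem_filter.mpr ⟨Finset.mem_univ u, (Finset.mem_filter.mp huM).2⟩
    calc (∑ M' ∈ MS, ((M'.filter (fun u => t ≤ g u)).card : ℝ))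
        = ((MS.biUnion (fun M' => M'.filter (fun u => t ≤ g u))).card : ℝ) := by
          rw [h2]; push_cast; ring
      _ ≤ (H.card : ℝ) := by exact_mod_cast Finset.card_le_card h3
  calc m * (D.card : ℝ) ≤ m * ∑ M' ∈ MS, (M'.card : ℝ) :=
        mul_le_mul_of_nonneg_left hcard1 (le_of_lt hm)
    _ ≤ ∑ M' ∈ MS, ((M'.filter (fun u => t ≤ g u)).card : ℝ) := hcard2
    _ ≤ (H.card : ℝ) := hcard3

end Tree


/-- Parameterized tree-histogram bound for Weitzman's rule with full updates
(Algorithm 3): for every run of the algorithm, every partially-adaptive solution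
`(π, τ)` with total opening cost `OPT_o` and total value cost `OPT_v`, and all
`β, γ ∈ (0,1)`, the algorithm's total cost is at most
`OPT_o/(β·γ·(1−γ)) + OPT_v/((1−β)·γ)`. -/
theorem weitzman_full_updates_histogram_bound
    {B S : Type*} [Fintype B] [Fintype S] [Nonempty B] [Nonempty S]
    [DecidableEq B] [DecidableEq S]
    (c : B → ℝ) (hc : ∀ b, 0 ≤ c b)
    (v : B → S → ℝ) (hv : ∀ b s, 0 ≤ v b s)
    -- a run of Algorithm 3: the chosen box `bx R` and covered set `A R` at each state,
    -- and the depth `d s` at which each scenario `s` is covered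
    (bx : Finset S → B) (A : Finset S → Finset S) (d : S → ℕ)
    (hAsub : ∀ s : S, ∀ k ≤ d s, A (fullPath v bx A s k) ⊆ fullPath v bx A s k)
    (hAne : ∀ s : S, ∀ k ≤ d s, (A (fullPath v bx A s k)).Nonempty)
    -- `(bx R, A R)` minimizes the ratio over all boxes and nonempty subsets of `R`:
    (hmin : ∀ s : S, ∀ k ≤ d s, ∀ b' : B, ∀ A' : Finset S,
      A' ⊆ fullPath v bx A s k → A'.Nonempty →
      (fullCostAt c v bx A s k (bx (fullPath v bx A s k)) * (fullPath v bx A s k).card +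
          ∑ x ∈ A (fullPath v bx A s k), v (bx (fullPath v bx A s k)) x) /
        (A (fullPath v bx A s k)).card ≤
      (fullCostAt c v bx A s k b' * (fullPath v bx A s k).card + ∑ x ∈ A', v b' x) /
        A'.card)
    -- scenario `s` survives until depth `d s`, where it is covered:
    (hnotcov : ∀ s : S, ∀ k < d s, s ∉ A (fullPath v bx A s k))
    (hcov : ∀ s : S, s ∈ A (fullPath v bx A s (d s)))
    -- any partially-adaptive solution:
    (π : Fin (Fintype.card B) ≃ B) (τ : S → Fin (Fintype.card B))
    -- parameters of the analysis:
    (β γ : ℝ) (hβ0 : 0 < β) (hβ1 : β < 1) (hγ0 : 0 < γ) (hγ1 : γ < 1) :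
    ∑ s, ((∑ k ∈ Finset.range (d s + 1),
          fullCostAt c v bx A s k (bx (fullPath v bx A s k))) +
        v (bx (fullPath v bx A s (d s))) s) ≤
      (∑ s, optOpenCost c π τ s) / (β * γ * (1 - γ)) +
        (∑ s, optValue v π τ s) / ((1 - β) * γ) := by
  classical
  have ho0 : ∀ u : S, 0 ≤ optOpenCost c π τ u := by
    intro u; exact Finset.sum_nonneg fun i _ => hc _
  have hw0 : ∀ u : S, 0 ≤ optValue v π τ u := by
    intro u
    obtain ⟨i, hi, hieq⟩ := Finset.exists_mem_eq_inf' Finset.nonempty_Iic (fun i => v (π i) u)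
    rw [optValue, hieq]; exact hv _ _
  have hmem_st : ∀ u : S, u ∈ fullPath v bx A u (d u) :=
    fun u => mem_fullPath_self v bx A d hnotcov u le_rfl
  have hr_pos : ∀ u : S, 0 < ((fullPath v bx A u (d u)).card : ℝ) := by
    intro u; exact_mod_cast Finset.card_pos.mpr ⟨u, hmem_st u⟩
  have hγ1' : 0 < 1 - γ := by linarith
  have hβ1' : 0 < 1 - β := by linarith
  have hargmin : ∀ u : S, ∃ i : Fin (Fintype.card B),
      i ∈ Finset.Iic (τ u) ∧ optValue v π τ u = v (π i) u := by
    intro u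
    obtain ⟨i, hi, hieq⟩ := Finset.exists_mem_eq_inf' Finset.nonempty_Iic (fun i => v (π i) u)
    exact ⟨i, hi, hieq⟩
  choose idx hidx_mem hidx_eq using hargmin
  have hquant : ∀ (m : ℝ), 0 < m → m ≤ 1 → ∀ (g : S → ℝ), (∀ u, 0 ≤ g u) → ∀ s : S,
      ∃ x : ℝ, 0 ≤ x ∧
        m * ((fullPath v bx A s (d s)).card : ℝ) ≤
          (((fullPath v bx A s (d s)).filter (fun u => x ≤ g u)).card : ℝ) ∧
        (((fullPath v bx A s (d s)).filter (fun u => x < g u)).card : ℝ) <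
          m * ((fullPath v bx A s (d s)).card : ℝ) := by
    intro m hm hm1 g hg s
    have hmr : 0 < m * ((fullPath v bx A s (d s)).card : ℝ) := mul_pos hm (hr_pos s)
    have hj1 : 1 ≤ ⌈m * ((fullPath v bx A s (d s)).card : ℝ)⌉₊ := Nat.ceil_pos.mpr hmr
    have hjR : ⌈m * ((fullPath v bx A s (d s)).card : ℝ)⌉₊ ≤ (fullPath v bx A s (d s)).card := by
      apply Nat.ceil_le.mpr
      nlinarith [hr_pos s]
    obtain ⟨s₀, hs₀, h1, h2⟩ := exists_quantile _ g _ hj1 hjR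
    refine ⟨g s₀, hg s₀, ?_, ?_⟩
    · calc m * ((fullPath v bx A s (d s)).card : ℝ)
          ≤ (⌈m * ((fullPath v bx A s (d s)).card : ℝ)⌉₊ : ℝ) := Nat.le_ceil _
        _ ≤ _ := by exact_mod_cast h1
    · have h2' : (((fullPath v bx A s (d s)).filter (fun u => g s₀ < g u)).card : ℝ) + 1 ≤
          (⌈m * ((fullPath v bx A s (d s)).card : ℝ)⌉₊ : ℝ) := by exact_mod_cast h2
      have hceil : (⌈m * ((fullPath v bx A s (d s)).card : ℝ)⌉₊ : ℝ) <
          m * ((fullPath v bx A s (d s)).card : ℝ) + 1 := Nat.ceil_lt_add_one (le_of_lt hmr)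
      linarith
  have hβγ : 0 < β * γ := mul_pos hβ0 hγ0
  have hβγ1 : β * γ ≤ 1 := by nlinarith
  have h2βγ : 0 < (1 - β) * γ := mul_pos hβ1' hγ0
  have h2βγ1 : (1 - β) * γ ≤ 1 := by nlinarith
  choose X hX0 hXdens hXtop using hquant (β * γ) hβγ hβγ1 (optOpenCost c π τ) ho0
  choose Y hY0 hYdens hYtop using hquant ((1 - β) * γ) h2βγ h2βγ1 (optValue v π τ) hw0
  -- Claim A: per-scenario ratio bound at the covering state
  have claimA : ∀ s : S,
      (fullCostAt c v bx A s (d s) (bx (fullPath v bx A s (d s))) *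
          ((fullPath v bx A s (d s)).card : ℝ) +
        ∑ x ∈ A (fullPath v bx A s (d s)), v (bx (fullPath v bx A s (d s))) x) /
        ((A (fullPath v bx A s (d s))).card : ℝ) ≤ X s / (1 - γ) + Y s := by
    intro s
    have hAneR : (A (fullPath v bx A s (d s))).Nonempty := ⟨s, hcov s⟩
    set R := fullPath v bx A s (d s) with hRdef
    set G := R.filter (fun u => optOpenCost c π τ u ≤ X s ∧ optValue v π τ u ≤ Y s) with hGdef
    have hring : β * γ * (R.card : ℝ) + (1 - β) * γ * (R.card : ℝ) = γ * (R.card : ℝ) := by ring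
    have hGcard : (1 - γ) * (R.card : ℝ) < (G.card : ℝ) := by
      have hcover : R ⊆ (G ∪ R.filter (fun u => X s < optOpenCost c π τ u)) ∪
          R.filter (fun u => Y s < optValue v π τ u) := by
        intro u hu
        by_cases h1 : optOpenCost c π τ u ≤ X s
        · by_cases h2 : optValue v π τ u ≤ Y s
          · exact Finset.mem_union_left _ (Finset.mem_union_left _
              (Finset.mem_filter.mpr ⟨hu, h1, h2⟩))
          · exact Finset.mem_union_right _ (Finset.mem_filter.mpr ⟨hu, not_le.mp h2⟩)
        · exact Finset.mem_union_left _ (Finset.mem_union_right _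
            (Finset.mem_filter.mpr ⟨hu, not_le.mp h1⟩))
      have hc1 : (R.card : ℝ) ≤ (G.card : ℝ) +
          ((R.filter (fun u => X s < optOpenCost c π τ u)).card : ℝ) +
          ((R.filter (fun u => Y s < optValue v π τ u)).card : ℝ) := by
        have h1 := Finset.card_le_card hcover
        have h2 := Finset.card_union_le (G ∪ R.filter (fun u => X s < optOpenCost c π τ u))
          (R.filter (fun u => Y s < optValue v π τ u))
        have h3 := Finset.card_union_le G (R.filter (fun u => X s < optOpenCost c π τ u))
        have : R.card ≤ G.card + (R.filter (fun u => X s < optOpenCost c π τ u)).card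
            + (R.filter (fun u => Y s < optValue v π τ u)).card := by omega
        exact_mod_cast this
      have c2 := hXtop s
      have c3 := hYtop s
      rw [← hRdef] at c2 c3
      linarith
    have hGpos : 0 < (G.card : ℝ) := by nlinarith [hr_pos s, hRdef ▸ hr_pos s]
    have hGpos' : 0 < (G.card : ℝ) := by
      have := hr_pos s
      rw [← hRdef] at this
      nlinarith
    have hGne : G.Nonempty := by
      rw [← Finset.card_pos]
      exact_mod_cast hGpos'
    have hGsubR : G ⊆ R := Finset.filter_subset _ _
    have hrnn : (0:ℝ) ≤ (R.card : ℝ) := Nat.cast_nonneg _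
    -- per-fiber inequality from minimality of the algorithm's choice
    have hfib : ∀ ι ∈ G.image idx,
        ((fullCostAt c v bx A s (d s) (bx R) * (R.card : ℝ) + ∑ x ∈ A R, v (bx R) x) /
            ((A R).card : ℝ)) * ((G.filter (fun u => idx u = ι)).card : ℝ) ≤
        c (π ι) * (R.card : ℝ) + Y s * ((G.filter (fun u => idx u = ι)).card : ℝ) := by
      intro ι hι
      obtain ⟨u₀, hu₀G, hu₀⟩ := Finset.mem_image.mp hι
      have hGιne : (G.filter (fun u => idx u = ι)).Nonempty :=
        ⟨u₀, Finset.mem_filter.mpr ⟨hu₀G, hu₀⟩⟩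
      have hGιpos : 0 < ((G.filter (fun u => idx u = ι)).card : ℝ) := by
        exact_mod_cast Finset.card_pos.mpr hGιne
      have hstep := hmin s (d s) le_rfl (π ι) (G.filter (fun u => idx u = ι))
        ((Finset.filter_subset _ _).trans hGsubR) hGιne
      have hstep2 := (le_div_iff₀ hGιpos).mp hstep
      have hval : ∑ x ∈ G.filter (fun u => idx u = ι), v (π ι) x ≤
          Y s * ((G.filter (fun u => idx u = ι)).card : ℝ) := by
        have hptw : ∀ x ∈ G.filter (fun u => idx u = ι), v (π ι) x ≤ Y s := by
          intro x hx
          obtain ⟨hxG, hxι⟩ := Finset.mem_filter.mp hx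
          have hvx : v (π ι) x = optValue v π τ x := by rw [← hxι, ← hidx_eq x]
          rw [hvx]
          exact (Finset.mem_filter.mp hxG).2.2
        calc ∑ x ∈ G.filter (fun u => idx u = ι), v (π ι) x
            ≤ ∑ _x ∈ G.filter (fun u => idx u = ι), Y s := Finset.sum_le_sum hptw
          _ = Y s * ((G.filter (fun u => idx u = ι)).card : ℝ) := by
              rw [Finset.sum_const, nsmul_eq_mul, mul_comm]
      have hcost : fullCostAt c v bx A s (d s) (π ι) ≤ c (π ι) :=
        fullCostAt_le c v bx A hc s (d s) (π ι)
      calc ((fullCostAt c v bx A s (d s) (bx R) * (R.card : ℝ) + ∑ x ∈ A R, v (bx R) x) /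
              ((A R).card : ℝ)) * ((G.filter (fun u => idx u = ι)).card : ℝ)
          ≤ fullCostAt c v bx A s (d s) (π ι) * (R.card : ℝ) +
              ∑ x ∈ G.filter (fun u => idx u = ι), v (π ι) x := hstep2
        _ ≤ c (π ι) * (R.card : ℝ) + Y s * ((G.filter (fun u => idx u = ι)).card : ℝ) :=
            add_le_add (mul_le_mul_of_nonneg_right hcost hrnn) hval
    have hfibsum : ∑ ι ∈ G.image idx, ((G.filter (fun u => idx u = ι)).card : ℝ) = (G.card : ℝ) := by
      rw [← Nat.cast_sum]
      exact_mod_cast congrArg (Nat.cast (R := ℝ))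
        (Finset.card_eq_sum_card_fiberwise (fun u hu => Finset.mem_image_of_mem idx hu)).symm
    have hcsum : ∑ ι ∈ G.image idx, c (π ι) ≤ X s := by
      have hIne : (G.image idx).Nonempty := hGne.image _
      obtain ⟨ustar, hustarG, hustar⟩ := Finset.mem_image.mp ((G.image idx).max'_mem hIne)
      have h1 : (G.image idx) ⊆ Finset.Iic (τ ustar) := by
        intro ι hι
        rw [Finset.mem_Iic]
        calc ι ≤ (G.image idx).max' hIne := Finset.le_max' _ _ hι
          _ = idx ustar := hustar.symm
          _ ≤ τ ustar := Finset.mem_Iic.mp (hidx_mem ustar)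
      calc ∑ ι ∈ G.image idx, c (π ι) ≤ ∑ ι ∈ Finset.Iic (τ ustar), c (π ι) :=
            Finset.sum_le_sum_of_subset_of_nonneg h1 (fun i _ _ => hc _)
        _ = optOpenCost c π τ ustar := rfl
        _ ≤ X s := (Finset.mem_filter.mp hustarG).2.1
    have hmain : ((fullCostAt c v bx A s (d s) (bx R) * (R.card : ℝ) +
          ∑ x ∈ A R, v (bx R) x) / ((A R).card : ℝ)) * (G.card : ℝ) ≤
        X s * (R.card : ℝ) + Y s * (G.card : ℝ) := by
      calc ((fullCostAt c v bx A s (d s) (bx R) * (R.card : ℝ) +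
              ∑ x ∈ A R, v (bx R) x) / ((A R).card : ℝ)) * (G.card : ℝ)
          = ∑ ι ∈ G.image idx, ((fullCostAt c v bx A s (d s) (bx R) * (R.card : ℝ) +
              ∑ x ∈ A R, v (bx R) x) / ((A R).card : ℝ)) *
                ((G.filter (fun u => idx u = ι)).card : ℝ) := by
            rw [← Finset.mul_sum, hfibsum]
        _ ≤ ∑ ι ∈ G.image idx,
              (c (π ι) * (R.card : ℝ) + Y s * ((G.filter (fun u => idx u = ι)).card : ℝ)) :=
            Finset.sum_le_sum hfib
        _ = (∑ ι ∈ G.image idx, c (π ι)) * (R.card : ℝ) +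
              Y s * ∑ ι ∈ G.image idx, ((G.filter (fun u => idx u = ι)).card : ℝ) := by
            rw [Finset.sum_add_distrib, ← Finset.sum_mul, ← Finset.mul_sum]
        _ ≤ X s * (R.card : ℝ) + Y s * (G.card : ℝ) := by
            rw [hfibsum]
            exact add_le_add (mul_le_mul_of_nonneg_right hcsum hrnn) le_rfl
    have h2 : X s * (R.card : ℝ) ≤ (X s / (1 - γ)) * (G.card : ℝ) := by
      have hle : (R.card : ℝ) * (1 - γ) ≤ (G.card : ℝ) := by nlinarith
      have hm := mul_le_mul_of_nonneg_left hle (div_nonneg (hX0 s) (le_of_lt hγ1'))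
      have heq : X s / (1 - γ) * ((R.card : ℝ) * (1 - γ)) = X s * (R.card : ℝ) := by
        field_simp
      linarith
    have h3 : ((fullCostAt c v bx A s (d s) (bx R) * (R.card : ℝ) +
          ∑ x ∈ A R, v (bx R) x) / ((A R).card : ℝ)) * (G.card : ℝ) ≤
        (X s / (1 - γ) + Y s) * (G.card : ℝ) := by
      rw [add_mul]
      linarith
    exact le_of_mul_le_mul_right h3 hGpos'

  -- canonical residual cost of a state
  set F : Finset S → ℝ := fun R => if h : (A R).Nonempty then
      fullCostAt c v bx A h.choose (d h.choose) (bx R) else 0 with hFdef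
  have hFval : ∀ (R : Finset S) (h : (A R).Nonempty),
      F R = fullCostAt c v bx A h.choose (d h.choose) (bx R) := fun R h => dif_pos h
  have hFeq : ∀ u : S, ∀ k, k ≤ d u →
      fullCostAt c v bx A u k (bx (fullPath v bx A u k)) = F (fullPath v bx A u k) := by
    intro u k hk
    have hne : (A (fullPath v bx A u k)).Nonempty := hAne u k hk
    rw [hFval _ hne]
    obtain ⟨hd', hP'⟩ := d_eq_of_mem_A v bx A d hnotcov hcov hk hne.choose_spec hAsub
    rw [hd']
    rw [fullCostAt_eq_of_mem c v bx A (hAsub u k hk hne.choose_spec)]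
  have hDle : ∀ u : S, d u ≤ Finset.univ.sup d := fun u => Finset.le_sup (Finset.mem_univ u)
  set T : Finset (S × ℕ) :=
    (Finset.univ ×ˢ Finset.range (Finset.univ.sup d + 1)).filter (fun q => q.2 ≤ d q.1) with hTdef
  have hTmem : ∀ q : S × ℕ, q ∈ T ↔ q.2 ≤ d q.1 := by
    intro q
    rw [hTdef]
    simp only [Finset.mem_filter, Finset.mem_product, Finset.mem_univ, Finset.mem_range, true_and]
    constructor
    · rintro ⟨_, h⟩; exact h
    · intro h; exact ⟨by have := hDle q.1; omega, h⟩
  have hTsum : ∀ f : S → ℕ → ℝ, ∑ q ∈ T, f q.1 q.2 = ∑ u, ∑ k ∈ Finset.range (d u + 1), f u k := by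
    intro f
    rw [hTdef, Finset.sum_filter, Finset.sum_product]
    apply Finset.sum_congr rfl
    intro u _
    rw [← Finset.sum_filter]
    apply Finset.sum_congr ?_ (fun _ _ => rfl)
    ext k
    simp only [Finset.mem_filter, Finset.mem_range]
    constructor
    · rintro ⟨h1, h2⟩; omega
    · intro h
      have := hDle u
      omega
  have himg : T.image (fun q => fullPath v bx A q.1 q.2) =
      Finset.univ.image (fun u => fullPath v bx A u (d u)) := by
    ext R
    simp only [Finset.mem_image]
    constructor
    · rintro ⟨q, hq, rfl⟩
      have hk := (hTmem q).mp hq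
      obtain ⟨u', hu'⟩ := hAne q.1 q.2 hk
      obtain ⟨hd', hP'⟩ := d_eq_of_mem_A v bx A d hnotcov hcov hk hu' hAsub
      exact ⟨u', Finset.mem_univ _, by rw [hd', hP']⟩
    · rintro ⟨u, _, rfl⟩
      exact ⟨(u, d u), (hTmem _).mpr le_rfl, rfl⟩
  have hfibT : ∀ R ∈ T.image (fun q => fullPath v bx A q.1 q.2),
      (T.filter (fun q => fullPath v bx A q.1 q.2 = R)).card = R.card := by
    intro R hR
    obtain ⟨q₀, hq₀, rfl⟩ := Finset.mem_image.mp hR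
    apply Finset.card_nbij (fun q => q.1)
    · intro q hq
      simp only [Finset.mem_coe, Finset.mem_filter] at hq
      obtain ⟨hqT, hqeq⟩ := hq
      have hmem := mem_fullPath_self v bx A d hnotcov q.1 ((hTmem q).mp hqT)
      rw [hqeq] at hmem
      exact hmem
    · intro q hq q' hq' heq
      simp only [Finset.coe_filter, Set.mem_setOf_eq] at hq hq'
      obtain ⟨hqT, hqeq⟩ := hq
      obtain ⟨hq'T, hq'eq⟩ := hq'
      have h2 : q.2 = q'.2 := by
        apply depth_unique v bx A d hnotcov hcov ((hTmem q).mp hqT) ((hTmem q').mp hq'T)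
          ?_ hAsub hAne
        rw [hqeq, hq'eq]
      exact Prod.ext heq h2
    · intro u hu
      simp only [Finset.mem_coe] at hu
      have hP := fullPath_eq_of_mem v bx A hu
      have hdu : q₀.2 ≤ d u := le_d_of_mem_fullPath v bx A d hcov (by rw [hP]; exact hu)
      refine ⟨(u, q₀.2), ?_, rfl⟩
      simp only [Finset.coe_filter, Set.mem_setOf_eq]
      exact ⟨(hTmem _).mpr hdu, hP⟩
  have hfibst : ∀ R ∈ Finset.univ.image (fun u => fullPath v bx A u (d u)),
      Finset.univ.filter (fun u => fullPath v bx A u (d u) = R) = A R := by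
    intro R hR
    obtain ⟨u₀, _, rfl⟩ := Finset.mem_image.mp hR
    ext u
    simp only [Finset.mem_filter, Finset.mem_univ, true_and]
    constructor
    · intro h
      have := hcov u
      rw [h] at this
      exact this
    · intro h
      obtain ⟨hd', hP'⟩ := d_eq_of_mem_A v bx A d hnotcov hcov le_rfl h hAsub
      rw [hd']
      exact hP'
  have hC1 : ∑ u, ∑ k ∈ Finset.range (d u + 1),
        fullCostAt c v bx A u k (bx (fullPath v bx A u k)) =
      ∑ u, F (fullPath v bx A u (d u)) * ((fullPath v bx A u (d u)).card : ℝ) /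
        ((A (fullPath v bx A u (d u))).card : ℝ) := by
    have e1 : ∑ u, ∑ k ∈ Finset.range (d u + 1),
        fullCostAt c v bx A u k (bx (fullPath v bx A u k)) =
        ∑ q ∈ T, F (fullPath v bx A q.1 q.2) := by
      rw [hTsum (fun u k => F (fullPath v bx A u k))]
      apply Finset.sum_congr rfl
      intro u _
      apply Finset.sum_congr rfl
      intro k hk
      exact hFeq u k (Nat.lt_succ_iff.mp (Finset.mem_range.mp hk))
    have e2 : ∑ q ∈ T, F (fullPath v bx A q.1 q.2) =
        ∑ R ∈ T.image (fun q => fullPath v bx A q.1 q.2), (R.card : ℝ) * F R := by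
      rw [Finset.sum_comp F (fun q : S × ℕ => fullPath v bx A q.1 q.2)]
      apply Finset.sum_congr rfl
      intro R hR
      rw [hfibT R hR, nsmul_eq_mul]
    have e3 : ∑ u, F (fullPath v bx A u (d u)) * ((fullPath v bx A u (d u)).card : ℝ) /
          ((A (fullPath v bx A u (d u))).card : ℝ) =
        ∑ R ∈ Finset.univ.image (fun u => fullPath v bx A u (d u)), (R.card : ℝ) * F R := by
      rw [Finset.sum_comp (fun R => F R * (R.card : ℝ) / ((A R).card : ℝ))
        (fun u : S => fullPath v bx A u (d u))]
      apply Finset.sum_congr rfl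
      intro R hR
      rw [hfibst R hR, nsmul_eq_mul]
      have hane : (A R).Nonempty := by
        obtain ⟨u₀, _, rfl⟩ := Finset.mem_image.mp hR
        exact ⟨u₀, hcov u₀⟩
      have hcard : ((A R).card : ℝ) ≠ 0 := by
        exact_mod_cast Finset.card_ne_zero_of_mem hane.choose_spec
      field_simp
    rw [e1, e2, e3, himg]
  have hC2 : ∑ u, v (bx (fullPath v bx A u (d u))) u =
      ∑ u, (∑ x ∈ A (fullPath v bx A u (d u)), v (bx (fullPath v bx A u (d u))) x) /
        ((A (fullPath v bx A u (d u))).card : ℝ) := by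
    rw [← Finset.sum_fiberwise Finset.univ (fun u => fullPath v bx A u (d u))
      (fun u => v (bx (fullPath v bx A u (d u))) u),
      ← Finset.sum_fiberwise Finset.univ (fun u => fullPath v bx A u (d u))
      (fun u => (∑ x ∈ A (fullPath v bx A u (d u)), v (bx (fullPath v bx A u (d u))) x) /
        ((A (fullPath v bx A u (d u))).card : ℝ))]
    apply Finset.sum_congr rfl
    intro R _
    rcases Finset.eq_empty_or_nonempty
      (Finset.univ.filter (fun u => fullPath v bx A u (d u) = R)) with he | hne
    · rw [he, Finset.sum_empty, Finset.sum_empty]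
    · obtain ⟨u₀, hu₀⟩ := hne
      have hu₀R : fullPath v bx A u₀ (d u₀) = R := (Finset.mem_filter.mp hu₀).2
      have hRimg : R ∈ Finset.univ.image (fun u => fullPath v bx A u (d u)) :=
        Finset.mem_image.mpr ⟨u₀, Finset.mem_univ _, hu₀R⟩
      have hAneR : (A R).Nonempty := by
        refine ⟨u₀, ?_⟩
        have := hcov u₀
        rw [hu₀R] at this
        exact this
      have hcardne : ((A R).card : ℝ) ≠ 0 := by
        exact_mod_cast Finset.card_ne_zero_of_mem hAneR.choose_spec
      have hmemeq : ∀ u ∈ Finset.univ.filter (fun u => fullPath v bx A u (d u) = R),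
          fullPath v bx A u (d u) = R := fun u hu => (Finset.mem_filter.mp hu).2
      calc ∑ u ∈ Finset.univ.filter (fun u => fullPath v bx A u (d u) = R),
            v (bx (fullPath v bx A u (d u))) u
          = ∑ u ∈ Finset.univ.filter (fun u => fullPath v bx A u (d u) = R), v (bx R) u := by
            apply Finset.sum_congr rfl
            intro u hu
            rw [hmemeq u hu]
        _ = ∑ u ∈ A R, v (bx R) u := by rw [hfibst R hRimg]
        _ = ∑ _u ∈ Finset.univ.filter (fun u => fullPath v bx A u (d u) = R),
            (∑ x ∈ A R, v (bx R) x) / ((A R).card : ℝ) := by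
            rw [hfibst R hRimg, Finset.sum_const, nsmul_eq_mul]
            field_simp
        _ = ∑ u ∈ Finset.univ.filter (fun u => fullPath v bx A u (d u) = R),
            (∑ x ∈ A (fullPath v bx A u (d u)), v (bx (fullPath v bx A u (d u))) x) /
              ((A (fullPath v bx A u (d u))).card : ℝ) := by
            apply Finset.sum_congr rfl
            intro u hu
            rw [hmemeq u hu]
  calc ∑ s, ((∑ k ∈ Finset.range (d s + 1),
          fullCostAt c v bx A s k (bx (fullPath v bx A s k))) +
        v (bx (fullPath v bx A s (d s))) s)
      = (∑ u, ∑ k ∈ Finset.range (d u + 1),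
          fullCostAt c v bx A u k (bx (fullPath v bx A u k)))
        + ∑ u, v (bx (fullPath v bx A u (d u))) u := Finset.sum_add_distrib
    _ = ∑ u, (F (fullPath v bx A u (d u)) * ((fullPath v bx A u (d u)).card : ℝ) /
          ((A (fullPath v bx A u (d u))).card : ℝ) +
        (∑ x ∈ A (fullPath v bx A u (d u)), v (bx (fullPath v bx A u (d u))) x) /
          ((A (fullPath v bx A u (d u))).card : ℝ)) := by
        rw [hC1, hC2, Finset.sum_add_distrib]
    _ ≤ ∑ u, (X u / (1 - γ) + Y u) := by
        apply Finset.sum_le_sum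
        intro u _
        have hA := claimA u
        have hrw : F (fullPath v bx A u (d u)) * ((fullPath v bx A u (d u)).card : ℝ) /
              ((A (fullPath v bx A u (d u))).card : ℝ) +
            (∑ x ∈ A (fullPath v bx A u (d u)), v (bx (fullPath v bx A u (d u))) x) /
              ((A (fullPath v bx A u (d u))).card : ℝ) =
            (fullCostAt c v bx A u (d u) (bx (fullPath v bx A u (d u))) *
                ((fullPath v bx A u (d u)).card : ℝ) +
              ∑ x ∈ A (fullPath v bx A u (d u)), v (bx (fullPath v bx A u (d u))) x) /
              ((A (fullPath v bx A u (d u))).card : ℝ) := by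
          rw [← hFeq u (d u) le_rfl, add_div]
        rw [hrw]
        exact hA
    _ = (∑ u, X u) / (1 - γ) + ∑ u, Y u := by
        rw [Finset.sum_add_distrib, Finset.sum_div]
    _ ≤ (∑ s, optOpenCost c π τ s) / (β * γ * (1 - γ)) +
        (∑ s, optValue v π τ s) / ((1 - β) * γ) := by
        have hhist1 := histogram_bound v bx A d hnotcov hcov hAsub (optOpenCost c π τ) ho0
          (β * γ) hβγ X hX0 hXdens
        have hhist2 := histogram_bound v bx A d hnotcov hcov hAsub (optValue v π τ) hw0
          ((1 - β) * γ) h2βγ Y hY0 hYdens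
        have ha : ∑ u, X u ≤ (∑ s, optOpenCost c π τ s) / (β * γ) := by
          rw [le_div_iff₀ hβγ]
          linarith [hhist1]
        have hb : ∑ u, Y u ≤ (∑ s, optValue v π τ s) / ((1 - β) * γ) := by
          rw [le_div_iff₀ h2βγ]
          linarith [hhist2]
        have hc' : (∑ u, X u) / (1 - γ) ≤ ((∑ s, optOpenCost c π τ s) / (β * γ)) / (1 - γ) :=
          (div_le_div_iff_of_pos_right hγ1').mpr ha
        rw [div_div] at hc'
        linarith
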